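/- Let F : ℝⁿ ⇉ ℝⁿ be locally bounded with closed graph, let g : ℝⁿ → ℝ be C¹ with locally Lipschitz gradient near x̄, and suppose sup_{u ∈ F(x̄)} ⟨∇g(x̄), u⟩ < 0. Then there exist ᾱ, ρ, ω > 0 such that for all α ∈ (0, ᾱ], all x ∈ B_ρ(x̄), and all u ∈ F(x), one has g(x + αu) − g(x) ≤ −ωα. -/

import Mathlib

open Set Metric

set_option maxHeartbeats 1000000 in
/-- First-order sufficient condition for a 1-d-Lyapunov decrease: if `F` is
locally bounded with closed graph, `g` is `C¹` with locally Lipschitz gradient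
near `xb`, and `sup_{u ∈ F xb} ⟪∇g(xb), u⟫ < 0`, then there are `ᾱ, ρ, ω > 0`
with `g (x + α • u) - g x ≤ -ω * α` for all `α ∈ (0, ᾱ]`, `x ∈ B_ρ(xb)`,
`u ∈ F x`. -/
theorem stmt_2 {n : ℕ}
    (F : EuclideanSpace ℝ (Fin n) → Set (EuclideanSpace ℝ (Fin n)))
    (g : EuclideanSpace ℝ (Fin n) → ℝ) (xb : EuclideanSpace ℝ (Fin n))
    (hbound : ∀ y, ∃ U ∈ nhds y, Bornology.IsBounded (⋃ z ∈ U, F z))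
    (hgraph : IsClosed {p : EuclideanSpace ℝ (Fin n) × EuclideanSpace ℝ (Fin n) | p.2 ∈ F p.1})
    (hC11 : ∃ ε > (0:ℝ), (∀ y ∈ ball xb ε, DifferentiableAt ℝ g y) ∧
      ContinuousOn (gradient g) (ball xb ε) ∧
      ∃ L : NNReal, LipschitzOnWith L (gradient g) (ball xb ε))
    (hne : (F xb).Nonempty)
    (hsup : ∃ m < (0:ℝ), ∀ u ∈ F xb, inner ℝ (gradient g xb) u ≤ m) :
    ∃ ᾱ > (0:ℝ), ∃ ρ > (0:ℝ), ∃ ω > (0:ℝ),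
      ∀ α ∈ Set.Ioc (0:ℝ) ᾱ, ∀ x ∈ closedBall xb ρ, ∀ u ∈ F x,
        g (x + α • u) - g x ≤ -ω * α := by
  obtain ⟨ε, hε, hdiff, hcont, L, hLip⟩ := hC11
  obtain ⟨m, hm, hsup⟩ := hsup
  obtain ⟨U, hU, hUb⟩ := hbound xb
  obtain ⟨r, hr, hrU⟩ : ∃ r > (0:ℝ), closedBall xb r ⊆ U := by
    obtain ⟨r, hr, h⟩ := Metric.mem_nhds_iff.mp hU
    exact ⟨r/2, by positivity, (closedBall_subset_ball (by linarith)).trans h⟩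
  obtain ⟨M0, hM0⟩ := hUb.exists_norm_le
  set M := max M0 1 with hM
  have hM1 : (1:ℝ) ≤ M := le_max_right _ _
  have hMpos : (0:ℝ) < M := lt_of_lt_of_le one_pos hM1
  have hnorm : ∀ x ∈ closedBall xb r, ∀ u ∈ F x, ‖u‖ ≤ M := fun x hx u hu =>
    le_trans (hM0 u (mem_iUnion₂.mpr ⟨x, hrU hx, hu⟩)) (le_max_left _ _)
  have hgrad : ∀ y (v : EuclideanSpace ℝ (Fin n)),
      (inner ℝ (gradient g y) v : ℝ) = fderiv ℝ g y v := fun y v => by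
    simp [gradient, InnerProductSpace.toDual_symm_apply]
  have hcont_xb : ContinuousAt (gradient g) xb :=
    hcont.continuousAt (ball_mem_nhds _ hε)
  have key : ∃ δ > (0:ℝ), δ ≤ r ∧ ∀ x ∈ closedBall xb δ, ∀ u ∈ F x,
      (inner ℝ (gradient g x) u : ℝ) ≤ m / 2 := by
    by_contra hcon
    push_neg at hcon
    have hex : ∀ k : ℕ, ∃ x ∈ closedBall xb (min r (1/(k+1))), ∃ u ∈ F x,
        m/2 < (inner ℝ (gradient g x) u : ℝ) := by
      intro k
      obtain ⟨x, hx, u, hu, hlt⟩ := hcon (min r (1/(k+1))) (lt_min hr (by positivity)) (min_le_left _ _)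
      exact ⟨x, hx, u, hu, hlt⟩
    choose x hx u hu hlt using hex
    have hxr : ∀ k, x k ∈ closedBall xb r := fun k =>
      closedBall_subset_closedBall (min_le_left _ _) (hx k)
    have hxlim : Filter.Tendsto x Filter.atTop (nhds xb) := by
      rw [tendsto_iff_dist_tendsto_zero]
      refine squeeze_zero (fun k => dist_nonneg) (fun k => ?_)
        tendsto_one_div_add_atTop_nhds_zero_nat
      exact le_trans (mem_closedBall.mp (hx k)) (min_le_right _ _)
    have huball : ∀ k, u k ∈ closedBall (0 : EuclideanSpace ℝ (Fin n)) M := fun k => by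
      rw [mem_closedBall_zero_iff]; exact hnorm _ (hxr k) _ (hu k)
    obtain ⟨ulim, hulim, φ, hφ, hφlim⟩ := (isCompact_closedBall
      (0 : EuclideanSpace ℝ (Fin n)) M).tendsto_subseq huball
    have hxφ : Filter.Tendsto (fun k => x (φ k)) Filter.atTop (nhds xb) :=
      hxlim.comp hφ.tendsto_atTop
    have hmem : ulim ∈ F xb := by
      have : Filter.Tendsto (fun k => (x (φ k), u (φ k))) Filter.atTop (nhds (xb, ulim)) :=
        hxφ.prodMk_nhds hφlim
      exact hgraph.mem_of_tendsto this (Filter.Eventually.of_forall fun k => hu (φ k))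
    have hcg : Filter.Tendsto (fun k => (inner ℝ (gradient g (x (φ k))) (u (φ k)) : ℝ))
        Filter.atTop (nhds (inner ℝ (gradient g xb) ulim)) :=
      Filter.Tendsto.inner (hcont_xb.tendsto.comp hxφ) hφlim
    have h1 : m/2 ≤ (inner ℝ (gradient g xb) ulim : ℝ) :=
      le_of_tendsto_of_tendsto' tendsto_const_nhds hcg fun k => (hlt (φ k)).le
    have h2 := hsup ulim hmem
    linarith
  obtain ⟨δ, hδ, hδr, hkey⟩ := key
  set ρ := min δ (ε/4) with hρdef
  have hρpos : (0:ℝ) < ρ := lt_min hδ (by positivity)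
  have hmneg : (0:ℝ) < -m := by linarith
  set A := min (ε/(4*M)) ((-m)/(8*((L:ℝ)+1)*M^2)) with hAdef
  have hApos : (0:ℝ) < A := by
    apply lt_min
    · positivity
    · positivity
  refine ⟨A, hApos, ρ, hρpos, -m/4, by linarith, ?_⟩
  rintro α ⟨hα0, hαA⟩ x hx u hu
  have hxδ : x ∈ closedBall xb δ := closedBall_subset_closedBall (min_le_left _ _) hx
  have hxε4 : dist x xb ≤ ε/4 := le_trans (mem_closedBall.mp hx) (min_le_right _ _)
  have hxball : x ∈ ball xb ε := by
    rw [mem_ball]; linarith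
  have hxr' : x ∈ closedBall xb r := closedBall_subset_closedBall hδr hxδ
  have hun : ‖u‖ ≤ M := hnorm x hxr' u hu
  have hαε : α * M ≤ ε/4 := by
    have h1 : α ≤ ε/(4*M) := le_trans hαA (min_le_left _ _)
    calc α * M ≤ (ε/(4*M)) * M := by nlinarith
    _ = ε/4 := by field_simp
  have hαm : ((L:ℝ)) * (α * M) * M ≤ -m/8 := by
    have h1 : α ≤ (-m)/(8*((L:ℝ)+1)*M^2) := le_trans hαA (min_le_right _ _)
    have hL0 : (0:ℝ) ≤ (L:ℝ) := L.coe_nonneg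
    have := mul_le_mul_of_nonneg_left h1 (by positivity : (0:ℝ) ≤ ((L:ℝ)+1)*M^2)
    have h2 : ((L:ℝ)+1)*M^2 * ((-m)/(8*((L:ℝ)+1)*M^2)) = -m/8 := by
      field_simp
    nlinarith
  set w := α • u with hwdef
  have hwn : ‖w‖ ≤ α * M := by
    rw [hwdef, norm_smul, Real.norm_eq_abs, abs_of_pos hα0]
    nlinarith
  have hwseg : ∀ t ∈ Icc (0:ℝ) 1, x + t • w ∈ ball xb ε := by
    intro t ht
    have htw : ‖t • w‖ ≤ α * M := by
      rw [norm_smul, Real.norm_eq_abs, abs_of_nonneg ht.1]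
      nlinarith [norm_nonneg w, ht.2]
    have : dist (x + t • w) xb ≤ dist x xb + ‖t • w‖ := by
      calc dist (x + t • w) xb ≤ dist (x + t • w) x + dist x xb := dist_triangle _ _ _
      _ = ‖t • w‖ + dist x xb := by rw [dist_eq_norm]; simp
      _ = dist x xb + ‖t • w‖ := by ring
    rw [mem_ball]
    have hε4 : (0:ℝ) < ε := hε
    linarith
  have hder : ∀ t ∈ Icc (0:ℝ) 1, HasDerivAt (fun s => g (x + s • w))
      ((inner ℝ (gradient g (x + t • w)) w : ℝ)) t := by
    intro t ht
    have h1 : HasDerivAt (fun s : ℝ => x + s • w) w t := by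
      simpa using ((hasDerivAt_id t).smul_const w).const_add x
    have h2 := (hdiff _ (hwseg t ht)).hasFDerivAt.comp_hasDerivAt t h1
    rw [hgrad]
    exact h2
  have hφcont : ContinuousOn (fun s => g (x + s • w)) (Icc (0:ℝ) 1) := fun t ht =>
    ((hder t ht).continuousAt).continuousWithinAt
  have hbound' : ∀ t ∈ interior (Icc (0:ℝ) 1), deriv (fun s => g (x + s • w)) t ≤ α * (m/4) := by
    intro t ht
    rw [interior_Icc] at ht
    have ht' : t ∈ Icc (0:ℝ) 1 := ⟨ht.1.le, ht.2.le⟩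
    rw [(hder t ht').deriv]
    have hsplit : (inner ℝ (gradient g (x + t • w)) w : ℝ)
        = α * ((inner ℝ (gradient g x) u : ℝ)
          + (inner ℝ (gradient g (x + t • w) - gradient g x) u : ℝ)) := by
      rw [hwdef, real_inner_smul_right, inner_sub_left]
      ring
    rw [hsplit]
    have h1 : (inner ℝ (gradient g x) u : ℝ) ≤ m/2 := hkey x hxδ u hu
    have h2 : (inner ℝ (gradient g (x + t • w) - gradient g x) u : ℝ)
        ≤ ‖gradient g (x + t • w) - gradient g x‖ * ‖u‖ := real_inner_le_norm _ _
    have h3 : ‖gradient g (x + t • w) - gradient g x‖ ≤ (L:ℝ) * ‖t • w‖ := by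
      have := hLip.dist_le_mul _ (hwseg t ht') _ hxball
      rw [dist_eq_norm] at this
      simpa using this
    have htw : ‖t • w‖ ≤ α * M := by
      rw [norm_smul, Real.norm_eq_abs, abs_of_nonneg ht'.1]
      nlinarith [norm_nonneg w, ht'.2]
    have h4 : ‖gradient g (x + t • w) - gradient g x‖ * ‖u‖ ≤ (L:ℝ) * (α * M) * M := by
      have hL0 : (0:ℝ) ≤ (L:ℝ) := L.coe_nonneg
      calc ‖gradient g (x + t • w) - gradient g x‖ * ‖u‖
          ≤ ((L:ℝ) * ‖t • w‖) * ‖u‖ := mul_le_mul_of_nonneg_right h3 (norm_nonneg u)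
        _ ≤ ((L:ℝ) * (α * M)) * M := by
            apply mul_le_mul (mul_le_mul_of_nonneg_left htw hL0) hun (norm_nonneg u)
            positivity
        _ = (L:ℝ) * (α * M) * M := rfl
    have : (inner ℝ (gradient g x) u : ℝ)
        + (inner ℝ (gradient g (x + t • w) - gradient g x) u : ℝ) ≤ m/4 := by linarith
    nlinarith
  have hφdiff : DifferentiableOn ℝ (fun s => g (x + s • w)) (interior (Icc (0:ℝ) 1)) := by
    intro t ht
    rw [interior_Icc] at ht
    exact ((hder t ⟨ht.1.le, ht.2.le⟩).differentiableAt).differentiableWithinAt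
  have hmvt := (convex_Icc (0:ℝ) 1).image_sub_le_mul_sub_of_deriv_le hφcont hφdiff hbound'
    0 (by norm_num) 1 (by norm_num) zero_le_one
  simp only [one_smul, zero_smul, add_zero] at hmvt
  rw [hwdef] at hmvt
  linarith
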